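/- With the lifting setup below for both C and D, let ψ : C → D be a chain map of R-complexes. Then for each k with 1 ≤ k ≤ c, the degree −2 families (ψ_{n−2}∘t_{k,n})_n and (s_{k,n}∘ψ_n)_n are homotopic: there exist R-linear maps τ_n : C_n → D_{n−1} such that ψ_{n−2}∘t_{k,n} − s_{k,n}∘ψ_n = d^D_{n−1}∘τ_n + τ_{n−1}∘d^C_n for all n. -/

import Mathlib

/-!
Statement 3 (Eisenbud): for a chain map `ψ : C → D` of complexes over `R = Q/(f₁,…,f_c)`
admitting lifts, the families `ψ ∘ t_k` and `s_k ∘ ψ` (where `t_k`, `s_k` are the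
Eisenbud operators of `C` and `D`) are homotopic.

A complex of `R`-modules with a lift is encoded by a family of finitely generated free
`Q`-modules with `Q`-linear maps `d̃` and `t̃_k` satisfying `d̃ ∘ d̃ = Σ f_k • t̃_k`;
the `R`-complex has modules `R ⊗[Q] C̃_n`, differentials `d̃ ⊗ R` and Eisenbud
operators `t̃_k ⊗ R`.
-/

open TensorProduct

/-- The quotient ring `R = Q/(f₁,…,f_c)`. -/
abbrev Rquot (Q : Type) [CommRing Q] {c : ℕ} (f : Fin c → Q) : Type :=
  Q ⧸ Ideal.span (Set.range f)

section Aux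
variable {Q : Type} [CommRing Q]

lemma ofList_ofFn {c : ℕ} (f : Fin c → Q) :
    Ideal.ofList (List.ofFn f) = Ideal.span (Set.range f) := by
  unfold Ideal.ofList
  exact congrArg Ideal.span (Set.ext fun x => List.mem_ofFn)

/-- Ring-level: relations on a weakly regular sequence have coefficients in the ideal. -/
lemma coeff_mem_of_relation : ∀ (c : ℕ) (f : Fin c → Q),
    RingTheory.Sequence.IsWeaklyRegular Q (List.ofFn f) →
    ∀ x : Fin c → Q, ∑ k, f k * x k = 0 → ∀ k, x k ∈ Ideal.span (Set.range f) := by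
  intro c
  induction c with
  | zero => intro f _ x _ k; exact k.elim0
  | succ c ih =>
    intro f hreg x hx
    have hsplit : List.ofFn f = List.ofFn (f ∘ Fin.castSucc) ++ [f (Fin.last c)] := by
      rw [List.ofFn_succ', List.concat_eq_append]
      rfl
    rw [hsplit, RingTheory.Sequence.isWeaklyRegular_append_iff] at hreg
    obtain ⟨hreg', hlast⟩ := hreg
    rw [RingTheory.Sequence.isWeaklyRegular_singleton_iff] at hlast
    have hIeq : (Ideal.ofList (List.ofFn (f ∘ Fin.castSucc)) • ⊤ : Submodule Q Q)
        = Ideal.span (Set.range (f ∘ Fin.castSucc)) := by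
      rw [Ideal.smul_eq_mul, Ideal.mul_top, ofList_ofFn]
    rw [Fin.sum_univ_castSucc] at hx
    have hmem : f (Fin.last c) * x (Fin.last c) ∈ Ideal.span (Set.range (f ∘ Fin.castSucc)) := by
      have hsum : f (Fin.last c) * x (Fin.last c)
          = - ∑ k : Fin c, f (Fin.castSucc k) * x (Fin.castSucc k) := by
        linear_combination hx
      rw [hsum]
      exact neg_mem (Ideal.sum_mem _ fun k _ =>
        Ideal.mul_mem_right _ _ (Ideal.subset_span ⟨k, rfl⟩))
    have hxlast : x (Fin.last c) ∈ Ideal.span (Set.range (f ∘ Fin.castSucc)) := by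
      have h0 : f (Fin.last c) • (Submodule.Quotient.mk (x (Fin.last c)) :
          Q ⧸ (Ideal.ofList (List.ofFn (f ∘ Fin.castSucc)) • ⊤ : Submodule Q Q))
          = f (Fin.last c) • 0 := by
        rw [smul_zero, ← Submodule.Quotient.mk_smul, Submodule.Quotient.mk_eq_zero, hIeq]
        simpa [smul_eq_mul] using hmem
      have := hlast h0
      rwa [Submodule.Quotient.mk_eq_zero, hIeq] at this
    obtain ⟨y, hy⟩ := (Submodule.mem_span_range_iff_exists_fun Q).mp hxlast
    have hy' : ∑ i : Fin c, y i * f (Fin.castSucc i) = x (Fin.last c) := by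
      simpa [smul_eq_mul] using hy
    have hrel : ∑ k : Fin c,
        (f ∘ Fin.castSucc) k * (x (Fin.castSucc k) + f (Fin.last c) * y k) = 0 := by
      simp only [Function.comp_apply]
      calc ∑ k : Fin c, f (Fin.castSucc k) * (x (Fin.castSucc k) + f (Fin.last c) * y k)
          = (∑ k : Fin c, f (Fin.castSucc k) * x (Fin.castSucc k))
              + f (Fin.last c) * (∑ i : Fin c, y i * f (Fin.castSucc i)) := by
            rw [Finset.mul_sum, ← Finset.sum_add_distrib]
            congr 1; ext k; ring
        _ = 0 := by rw [hy']; exact hx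
    have hmain := ih (f ∘ Fin.castSucc) hreg' _ hrel
    have hI'le : Ideal.span (Set.range (f ∘ Fin.castSucc)) ≤ Ideal.span (Set.range f) :=
      Ideal.span_mono (Set.range_comp_subset_range _ _)
    intro k
    induction k using Fin.lastCases with
    | last => exact hI'le hxlast
    | cast i =>
      have h1 : x (Fin.castSucc i) + f (Fin.last c) * y i ∈ Ideal.span (Set.range f) :=
        hI'le (hmain i)
      have h2 : f (Fin.last c) * y i ∈ Ideal.span (Set.range f) :=
        Ideal.mul_mem_right _ _ (Ideal.subset_span ⟨Fin.last c, rfl⟩)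
      simpa using sub_mem h1 h2

end Aux

section Aux2
variable {Q : Type} [CommRing Q] {c : ℕ} {f : Fin c → Q}
variable {M N : Type} [AddCommGroup M] [Module Q M] [AddCommGroup N] [Module Q N]

lemma exists_of_mem_smul_top {x : N}
    (hx : x ∈ Ideal.span (Set.range f) • (⊤ : Submodule Q N)) :
    ∃ y : Fin c → N, x = ∑ k, f k • y k := by
  refine Submodule.smul_induction_on hx ?_ ?_
  · intro r hr n _
    obtain ⟨a, ha⟩ := (Submodule.mem_span_range_iff_exists_fun Q).mp hr
    refine ⟨fun k => a k • n, ?_⟩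
    rw [← ha, Finset.sum_smul]
    exact Finset.sum_congr rfl fun k _ => by rw [smul_smul, smul_eq_mul, mul_comm]
  · rintro x y ⟨u, rfl⟩ ⟨v, rfl⟩
    exact ⟨u + v, by simp [smul_add, Finset.sum_add_distrib]⟩

lemma one_tmul_eq_zero_iff (I : Ideal Q) (x : N) :
    (1 : Q ⧸ I) ⊗ₜ[Q] x = (0 : (Q ⧸ I) ⊗[Q] N) ↔ x ∈ I • (⊤ : Submodule Q N) := by
  rw [← TensorProduct.quotTensorEquivQuotSMul_symm_mk I x,
    LinearEquiv.map_eq_zero_iff, Submodule.Quotient.mk_eq_zero]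

lemma exists_lift [Module.Free Q M] [Module.Finite Q M] (I : Ideal Q)
    (g : ((Q ⧸ I) ⊗[Q] M) →ₗ[Q ⧸ I] ((Q ⧸ I) ⊗[Q] N)) :
    ∃ gt : M →ₗ[Q] N, gt.baseChange (Q ⧸ I) = g := by
  let b := Module.Free.chooseBasis Q M
  have hsurj : Function.Surjective (TensorProduct.mk Q (Q ⧸ I) N 1) :=
    TensorProduct.mk_surjective Q N (Q ⧸ I) Ideal.Quotient.mk_surjective
  choose y hy using fun i => hsurj (g ((1 : Q ⧸ I) ⊗ₜ b i))
  refine ⟨b.constr Q y, Module.Basis.ext (b.baseChange (Q ⧸ I)) fun i => ?_⟩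
  rw [Module.Basis.baseChange_apply, LinearMap.baseChange_tmul, Module.Basis.constr_basis]
  exact hy i

/-- If a base-changed map vanishes, the map decomposes through the `f k`. -/
lemma exists_decomp_of_baseChange_eq_zero [Module.Free Q M] [Module.Finite Q M]
    (g : M →ₗ[Q] N) (hg : g.baseChange (Rquot Q f) = 0) :
    ∃ u : Fin c → (M →ₗ[Q] N), g = ∑ k, f k • u k := by
  let b := Module.Free.chooseBasis Q M
  have hmem : ∀ i, g (b i) ∈ Ideal.span (Set.range f) • (⊤ : Submodule Q N) := by
    intro i
    rw [← one_tmul_eq_zero_iff (Ideal.span (Set.range f)) (g (b i)),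
      ← LinearMap.baseChange_tmul, hg]
    rfl
  choose y hy using fun i => exists_of_mem_smul_top (hmem i)
  refine ⟨fun k => b.constr Q (fun i => y i k), b.ext fun i => ?_⟩
  rw [hy i]
  rw [LinearMap.sum_apply]
  exact Finset.sum_congr rfl fun k _ => by
    rw [LinearMap.smul_apply, Module.Basis.constr_basis]

/-- baseChange of `∑ f k • u k` vanishes. -/
lemma baseChange_sum_smul (u : Fin c → (M →ₗ[Q] N)) :
    (∑ k, f k • u k).baseChange (Rquot Q f) = 0 := by
  have : LinearMap.baseChange (Rquot Q f) (∑ k, f k • u k)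
      = ∑ k, LinearMap.baseChangeHom Q (Rquot Q f) M N (f k • u k) :=
    map_sum (LinearMap.baseChangeHom Q (Rquot Q f) M N) _ _
  rw [this]
  refine Finset.sum_eq_zero fun k _ => ?_
  have h1 : LinearMap.baseChangeHom Q (Rquot Q f) M N (f k • u k)
      = f k • (u k).baseChange (Rquot Q f) := map_smul _ _ _
  rw [h1, ← algebraMap_smul (Rquot Q f) (f k)]
  have hz : algebraMap Q (Rquot Q f) (f k) = 0 := by
    rw [Ideal.Quotient.algebraMap_eq, Ideal.Quotient.eq_zero_iff_mem]
    exact Ideal.subset_span ⟨k, rfl⟩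
  rw [hz, zero_smul]

end Aux2

section Aux3
variable {Q : Type} [CommRing Q] {c : ℕ} {f : Fin c → Q}
variable {M N : Type} [AddCommGroup M] [Module Q M] [AddCommGroup N] [Module Q N]

lemma mem_smul_top_of_relation [Module.Free Q M] [Module.Finite Q M]
    (hreg : RingTheory.Sequence.IsWeaklyRegular Q (List.ofFn f))
    (x : Fin c → M) (hx : ∑ k, f k • x k = 0) (k : Fin c) :
    x k ∈ Ideal.span (Set.range f) • (⊤ : Submodule Q M) := by
  let b := Module.Free.chooseBasis Q M
  have hcoord : ∀ i, ∑ j, f j * (b.repr (x j) i) = 0 := by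
    intro i
    have h1 := congrArg (fun m => b.repr m i) hx
    simpa [map_sum, Finsupp.finset_sum_apply, smul_eq_mul] using h1
  have hmem : ∀ j i, b.repr (x j) i ∈ Ideal.span (Set.range f) := fun j i =>
    coeff_mem_of_relation c f hreg (fun j => b.repr (x j) i) (hcoord i) j
  rw [← b.sum_repr (x k)]
  exact Submodule.sum_mem _ fun i _ => Submodule.smul_mem_smul (hmem k i) Submodule.mem_top

lemma baseChange_eq_zero_of_relation
    [Module.Free Q M] [Module.Finite Q M] [Module.Free Q N] [Module.Finite Q N]
    (hreg : RingTheory.Sequence.IsWeaklyRegular Q (List.ofFn f))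
    (E : Fin c → (M →ₗ[Q] N)) (hE : ∑ k, f k • E k = 0) (k : Fin c) :
    (E k).baseChange (Rquot Q f) = 0 := by
  obtain ⟨y, hy⟩ := exists_of_mem_smul_top (mem_smul_top_of_relation hreg E hE k)
  rw [hy]
  exact baseChange_sum_smul y


end Aux3

/-- `ψ ∘ t_k` is homotopic to `s_k ∘ ψ` for any chain map `ψ : C → D`. -/
theorem eisenbud_operators_commute_with_chain_maps
    (Q : Type) [CommRing Q] (c : ℕ) (f : Fin c → Q)
    (hreg : RingTheory.Sequence.IsRegular Q (List.ofFn f))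
    (Ct Dt : ℤ → Type)
    [∀ n, AddCommGroup (Ct n)] [∀ n, Module Q (Ct n)]
    [∀ n, AddCommGroup (Dt n)] [∀ n, Module Q (Dt n)]
    (hCfree : ∀ n, Module.Free Q (Ct n)) (hCfin : ∀ n, Module.Finite Q (Ct n))
    (hDfree : ∀ n, Module.Free Q (Dt n)) (hDfin : ∀ n, Module.Finite Q (Dt n))
    (dtC : ∀ n : ℤ, Ct (n + 1) →ₗ[Q] Ct n)
    (dtD : ∀ n : ℤ, Dt (n + 1) →ₗ[Q] Dt n)
    (ttC : Fin c → ∀ n : ℤ, Ct (n + 1 + 1) →ₗ[Q] Ct n)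
    (ttD : Fin c → ∀ n : ℤ, Dt (n + 1 + 1) →ₗ[Q] Dt n)
    (hddC : ∀ (n : ℤ) (x : Ct (n + 1 + 1)),
      dtC n (dtC (n + 1) x) = ∑ k, f k • ttC k n x)
    (hddD : ∀ (n : ℤ) (x : Dt (n + 1 + 1)),
      dtD n (dtD (n + 1) x) = ∑ k, f k • ttD k n x)
    (ψ : ∀ n : ℤ, (Rquot Q f ⊗[Q] Ct n) →ₗ[Rquot Q f] (Rquot Q f ⊗[Q] Dt n))
    (hψ : ∀ (n : ℤ) (x : Rquot Q f ⊗[Q] Ct (n + 1)),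
      ψ n ((dtC n).baseChange (Rquot Q f) x) =
        (dtD n).baseChange (Rquot Q f) (ψ (n + 1) x)) :
    ∀ k : Fin c,
      ∃ τ : ∀ n : ℤ, (Rquot Q f ⊗[Q] Ct (n + 1)) →ₗ[Rquot Q f] (Rquot Q f ⊗[Q] Dt n),
        ∀ (n : ℤ) (x : Rquot Q f ⊗[Q] Ct (n + 1 + 1)),
          ψ n ((ttC k n).baseChange (Rquot Q f) x) -
              (ttD k n).baseChange (Rquot Q f) (ψ (n + 1 + 1) x) =
            (dtD n).baseChange (Rquot Q f) (τ (n + 1) x) +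
              τ n ((dtC (n + 1)).baseChange (Rquot Q f) x) := by
  intro k
  have hwreg := hreg.toIsWeaklyRegular
  -- lift ψ to Q-linear maps
  have hlift : ∀ n : ℤ, ∃ gt : Ct n →ₗ[Q] Dt n, gt.baseChange (Rquot Q f) = ψ n := fun n => by
    haveI := hCfree n; haveI := hCfin n
    exact exists_lift (Ideal.span (Set.range f)) (ψ n)
  choose ψt hψt using hlift
  -- the defect of ψt being a chain map
  set h : ∀ n : ℤ, Ct (n + 1) →ₗ[Q] Dt n :=
    fun n => ψt n ∘ₗ dtC n - dtD n ∘ₗ ψt (n + 1) with hh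
  have hbc : ∀ n, (h n).baseChange (Rquot Q f) = 0 := by
    intro n
    have h1 : (h n).baseChange (Rquot Q f)
        = (ψt n ∘ₗ dtC n).baseChange (Rquot Q f)
          - (dtD n ∘ₗ ψt (n + 1)).baseChange (Rquot Q f) :=
      map_sub (LinearMap.baseChangeHom Q (Rquot Q f) _ _) _ _
    rw [h1, LinearMap.baseChange_comp, LinearMap.baseChange_comp, hψt, hψt]
    refine LinearMap.ext fun x => ?_
    exact sub_eq_zero.mpr (hψ n x)
  have hdecomp : ∀ n : ℤ, ∃ u : Fin c → (Ct (n + 1) →ₗ[Q] Dt n),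
      h n = ∑ j, f j • u j := fun n => by
    haveI := hCfree (n + 1); haveI := hCfin (n + 1)
    exact exists_decomp_of_baseChange_eq_zero (h n) (hbc n)
  choose τt hτt using hdecomp
  -- pointwise form of the decomposition
  have hτ' : ∀ (n : ℤ) (z : Ct (n + 1)),
      ∑ j, f j • τt n j z = ψt n (dtC n z) - dtD n (ψt (n + 1) z) := by
    intro n z
    have := congrArg (fun g => g z) (hτt n).symm
    simpa [hh, LinearMap.sum_apply, LinearMap.smul_apply] using this
  -- the homotopy defect operators
  set E : ∀ n : ℤ, Fin c → (Ct (n + 1 + 1) →ₗ[Q] Dt n) :=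
    fun n j => ψt n ∘ₗ ttC j n - ttD j n ∘ₗ ψt (n + 1 + 1)
      - dtD n ∘ₗ τt (n + 1) j - τt n j ∘ₗ dtC (n + 1) with hE
  have hErel : ∀ n : ℤ, ∑ j, f j • E n j = 0 := by
    intro n
    ext x
    have e1 : ∑ j, f j • ψt n (ttC j n x) = ψt n (dtC n (dtC (n + 1) x)) := by
      rw [hddC n x, map_sum]
      exact Finset.sum_congr rfl fun j _ => (map_smul _ _ _).symm
    have e2 : ∑ j, f j • ttD j n (ψt (n + 1 + 1) x)
        = dtD n (dtD (n + 1) (ψt (n + 1 + 1) x)) := (hddD n _).symm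
    have e3 : ∑ j, f j • dtD n (τt (n + 1) j x)
        = dtD n (ψt (n + 1) (dtC (n + 1) x)) - dtD n (dtD (n + 1) (ψt (n + 1 + 1) x)) := by
      have : ∑ j, f j • dtD n (τt (n + 1) j x) = dtD n (∑ j, f j • τt (n + 1) j x) := by
        rw [map_sum]
        exact Finset.sum_congr rfl fun j _ => (map_smul _ _ _).symm
      rw [this, hτ' (n + 1) x, map_sub]
    have e4 : ∑ j, f j • τt n j (dtC (n + 1) x)
        = ψt n (dtC n (dtC (n + 1) x)) - dtD n (ψt (n + 1) (dtC (n + 1) x)) :=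
      hτ' n _
    have expand : ∑ j, f j • (E n j) x
        = (∑ j, f j • ψt n (ttC j n x)) - (∑ j, f j • ttD j n (ψt (n + 1 + 1) x))
          - (∑ j, f j • dtD n (τt (n + 1) j x)) - (∑ j, f j • τt n j (dtC (n + 1) x)) := by
      simp only [hE, LinearMap.sub_apply, LinearMap.comp_apply, smul_sub,
        Finset.sum_sub_distrib]
    have final : ∑ j, f j • (E n j) x = 0 := by
      rw [expand, e1, e2, e3, e4]
      abel
    simpa [LinearMap.sum_apply, LinearMap.smul_apply] using final
  have hEbc : ∀ n : ℤ, (E n k).baseChange (Rquot Q f) = 0 := fun n => by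
    haveI := hCfree (n + 1 + 1); haveI := hCfin (n + 1 + 1)
    haveI := hDfree n; haveI := hDfin n
    exact baseChange_eq_zero_of_relation hwreg (E n) (hErel n) k
  refine ⟨fun n => (τt n k).baseChange (Rquot Q f), fun n x => ?_⟩
  have h0 := congrArg (fun g => g x) (hEbc n)
  have hexp : (E n k).baseChange (Rquot Q f)
      = ψ n ∘ₗ (ttC k n).baseChange (Rquot Q f)
        - (ttD k n).baseChange (Rquot Q f) ∘ₗ ψ (n + 1 + 1)
        - (dtD n).baseChange (Rquot Q f) ∘ₗ (τt (n + 1) k).baseChange (Rquot Q f)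
        - (τt n k).baseChange (Rquot Q f) ∘ₗ (dtC (n + 1)).baseChange (Rquot Q f) := by
    have m1 : (E n k).baseChange (Rquot Q f)
        = (ψt n ∘ₗ ttC k n).baseChange (Rquot Q f)
          - (ttD k n ∘ₗ ψt (n + 1 + 1)).baseChange (Rquot Q f)
          - (dtD n ∘ₗ τt (n + 1) k).baseChange (Rquot Q f)
          - (τt n k ∘ₗ dtC (n + 1)).baseChange (Rquot Q f) := by
      rw [hE]
      exact (map_sub (LinearMap.baseChangeHom Q (Rquot Q f) _ _) _ _).trans <| by
        rw [map_sub (LinearMap.baseChangeHom Q (Rquot Q f) _ _),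
          map_sub (LinearMap.baseChangeHom Q (Rquot Q f) _ _)]
        rfl
    rw [m1, LinearMap.baseChange_comp, LinearMap.baseChange_comp,
      LinearMap.baseChange_comp, LinearMap.baseChange_comp, hψt, hψt]
  rw [hexp] at h0
  simp only [LinearMap.sub_apply, LinearMap.comp_apply, LinearMap.zero_apply] at h0
  rw [sub_sub (_ - _)] at h0
  exact sub_eq_zero.mp h0
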